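/- For t ∈ ℂ let p_t(x,y) = t(x - 1) + x³ + x² - y². Then the set of t ∈ ℂ for which there exists (x,y) ∈ ℂ² with p_t(x,y) = 0, t + 3x² + 2x = 0 and -2y = 0 (i.e. for which the affine curve {p_t = 0} has a singular point) is exactly {0, -(11 + 5√5)/2, -(11 - 5√5)/2}. In other words, besides the curve C₁ (the fiber over [1:0]), the pencil generated by C₁ and C₂ contains exactly three singular members C₂, C₃, C₄, occurring at the parameter values t = 0 and t = -(11 ± 5√5)/2. -/
import Mathlib


/-- The parameter values `t` for which the affine cubic
`p_t(x,y) = t(x-1) + x³ + x² - y²` has a singular point are exactly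
`t = 0` and `t = -(11 ± 5√5)/2`: besides `C₁`, the pencil generated by `C₁`
and `C₂` contains exactly the three singular members `C₂, C₃, C₄`. -/
theorem singular_members_of_pencil :
    {t : ℂ | ∃ x y : ℂ,
        t * (x - 1) + x ^ 3 + x ^ 2 - y ^ 2 = 0 ∧
        t + 3 * x ^ 2 + 2 * x = 0 ∧
        -(2 * y) = 0} =
      {0, (↑(-(11 + 5 * Real.sqrt 5) / 2) : ℂ),
        (↑(-(11 - 5 * Real.sqrt 5) / 2) : ℂ)} := by
  have h5 : ((Real.sqrt 5 : ℝ) : ℂ) ^ 2 = 5 := by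
    norm_cast
    exact Real.sq_sqrt (by norm_num)
  set s : ℂ := ((Real.sqrt 5 : ℝ) : ℂ) with hs
  have hA : (↑(-(11 + 5 * Real.sqrt 5) / 2) : ℂ) = -(11 + 5 * s) / 2 := by
    push_cast; ring
  have hB : (↑(-(11 - 5 * Real.sqrt 5) / 2) : ℂ) = -(11 - 5 * s) / 2 := by
    push_cast; ring
  ext t
  simp only [Set.mem_setOf_eq, Set.mem_insert_iff, Set.mem_singleton_iff, hA, hB]
  constructor
  · rintro ⟨x, y, h1, h2, h3⟩
    have ht : t = -(3 * x ^ 2 + 2 * x) := by linear_combination h2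
    have hcube : x ^ 3 - x ^ 2 - x = 0 := by
      linear_combination -(1/2 : ℂ) * h1 - ((1 - x)/2) * h2 + (y/4) * h3
    have hx : x * ((x - (1 + s) / 2) * (x - (1 - s) / 2)) = 0 := by
      linear_combination hcube - (x / 4) * h5
    rcases mul_eq_zero.mp hx with hx0 | hx1
    · left
      subst hx0
      linear_combination ht
    · rcases mul_eq_zero.mp hx1 with hxa | hxb
      · right; left
        have hxe : x = (1 + s) / 2 := by linear_combination hxa
        subst hxe
        linear_combination ht - (3/4 : ℂ) * h5
      · right; right
        have hxe : x = (1 - s) / 2 := by linear_combination hxb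
        subst hxe
        linear_combination ht - (3/4 : ℂ) * h5
  · rintro (rfl | rfl | rfl)
    · exact ⟨0, 0, by ring, by ring, by ring⟩
    · exact ⟨(1 + s) / 2, 0,
        by linear_combination ((s - 5) / 8) * h5,
        by linear_combination (3/4 : ℂ) * h5,
        by ring⟩
    · exact ⟨(1 - s) / 2, 0,
        by linear_combination ((-s - 5) / 8) * h5,
        by linear_combination (3/4 : ℂ) * h5,
        by ring⟩
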